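/- Poly-pumping sequences are poly-uniform: for every polynomial word expression e over a finite alphabet Σ and every letter c ∈ Σ, there exists a finite set A ⊆ ℚ[X] of polynomials such that for all n ∈ ℕ, every maximal block of consecutive c's in the word ⟦e⟧(n) has length P(n) for some P ∈ A. -/

import Mathlib

/-- Polynomial word expressions: `e ::= w | e · e' | e*`. -/
inductive PolyExpr (S : Type*) where
  | word : List S → PolyExpr S
  | cat : PolyExpr S → PolyExpr S → PolyExpr S
  | star : PolyExpr S → PolyExpr S

/-- The poly-pumping sequence `⟦e⟧ : ℕ → S*`. -/
def PolyExpr.eval {S : Type*} : PolyExpr S → ℕ → List S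
  | .word w, _ => w
  | .cat e e', n => e.eval n ++ e'.eval n
  | .star e, n => (List.replicate n (e.eval n)).flatten

/-- `β_c(u)`: the set of lengths of maximal blocks of consecutive `c`'s in `u`. -/
def maxBlocks {S : Type*} (c : S) (u : List S) : Set ℕ :=
  {k | ∃ x y : List S, u = x ++ List.replicate k c ++ y ∧
        x.getLast? ≠ some c ∧ y.head? ≠ some c}

lemma join_eq_flatten {α : Type*} (l : List (List α)) : l.flatten = l.flatten := rfl

/-- Length of the maximal `c`-prefix of `u`. -/
def cPre {S : Type*} [DecidableEq S] (c : S) : List S → ℕ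
  | [] => 0
  | a :: t => if a = c then cPre c t + 1 else 0

/-- Length of the maximal `c`-suffix of `u`. -/
def cSuf {S : Type*} [DecidableEq S] (c : S) (u : List S) : ℕ := cPre c u.reverse

lemma cPre_cons_self {S : Type*} [DecidableEq S] (c : S) (t : List S) :
    cPre c (c :: t) = cPre c t + 1 := by
  simp [cPre]

lemma cPre_cons_ne {S : Type*} [DecidableEq S] {c a : S} (t : List S) (h : ¬ a = c) :
    cPre c (a :: t) = 0 := by
  simp [cPre, h]

lemma cPre_le_length {S : Type*} [DecidableEq S] (c : S) (u : List S) :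
    cPre c u ≤ u.length := by
  induction u with
  | nil => simp [cPre]
  | cons a t ih =>
    simp only [cPre, List.length_cons]
    split <;> omega

lemma cPre_spec {S : Type*} [DecidableEq S] (c : S) (u : List S) :
    ∃ y : List S, u = List.replicate (cPre c u) c ++ y ∧ y.head? ≠ some c := by
  induction u with
  | nil => exact ⟨[], by simp [cPre]⟩
  | cons a t ih =>
    by_cases h : a = c
    · obtain ⟨y, hy, hy2⟩ := ih
      refine ⟨y, ?_, hy2⟩
      subst h
      rw [cPre_cons_self, List.replicate_succ, List.cons_append]
      rw [← hy]
    · exact ⟨a :: t, by simp [cPre, h], by simp [h]⟩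

lemma cPre_mem {S : Type*} [DecidableEq S] (c : S) (u : List S) :
    cPre c u ∈ maxBlocks c u := by
  obtain ⟨y, hy, hy2⟩ := cPre_spec c u
  exact ⟨[], y, by simpa using hy, by simp, hy2⟩

lemma cSuf_spec {S : Type*} [DecidableEq S] (c : S) (u : List S) :
    ∃ x : List S, u = x ++ List.replicate (cSuf c u) c ∧ x.getLast? ≠ some c := by
  obtain ⟨y, hy, hy2⟩ := cPre_spec c u.reverse
  refine ⟨y.reverse, ?_, by simpa using hy2⟩
  have := congrArg List.reverse hy
  simpa [cSuf, List.reverse_append, List.reverse_replicate] using this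

lemma cSuf_mem {S : Type*} [DecidableEq S] (c : S) (u : List S) :
    cSuf c u ∈ maxBlocks c u := by
  obtain ⟨x, hx, hx2⟩ := cSuf_spec c u
  exact ⟨x, [], by simpa using hx, hx2, by simp⟩

lemma cPre_replicate_append {S : Type*} [DecidableEq S] {c : S} {y : List S} (q : ℕ)
    (hy : y.head? ≠ some c) : cPre c (List.replicate q c ++ y) = q := by
  induction q with
  | zero =>
    simp only [List.replicate_zero, List.nil_append]
    cases y with
    | nil => simp [cPre]
    | cons a t =>
      have : a ≠ c := by simpa using hy
      simp [cPre, this]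
  | succ q ih => simp [List.replicate_succ, cPre, ih]

lemma cSuf_append_replicate {S : Type*} [DecidableEq S] {c : S} {x : List S} (p : ℕ)
    (hx : x.getLast? ≠ some c) : cSuf c (x ++ List.replicate p c) = p := by
  unfold cSuf
  rw [List.reverse_append, List.reverse_replicate]
  exact cPre_replicate_append p (by simpa using hx)

lemma cPre_eq_length_iff {S : Type*} [DecidableEq S] (c : S) (u : List S) :
    cPre c u = u.length ↔ u = List.replicate u.length c := by
  induction u with
  | nil => simp [cPre]
  | cons a t ih =>
    simp only [List.length_cons, List.replicate_succ, List.cons.injEq]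
    by_cases h : a = c
    · subst h
      rw [cPre_cons_self]
      constructor
      · intro hh
        exact ⟨rfl, ih.mp (by omega)⟩
      · rintro ⟨-, ht⟩
        rw [ih.mpr ht]
    · rw [cPre_cons_ne _ h]
      constructor
      · intro hh; omega
      · rintro ⟨rfl, -⟩; exact absurd rfl h

lemma cPre_append_of_lt {S : Type*} [DecidableEq S] {c : S} {u : List S} (w : List S)
    (h : cPre c u < u.length) : cPre c (u ++ w) = cPre c u := by
  induction u with
  | nil => simp at h
  | cons a t ih =>
    by_cases hac : a = c
    · subst hac
      rw [cPre_cons_self] at h ⊢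
      simp only [List.length_cons] at h
      rw [List.cons_append, cPre_cons_self]
      rw [ih (by omega)]
    · rw [List.cons_append, cPre_cons_ne _ hac, cPre_cons_ne _ hac]

lemma maxBlocks_nil {S : Type*} {c : S} {k : ℕ} (h : k ∈ maxBlocks c ([] : List S)) :
    k = 0 := by
  obtain ⟨x, y, hxy, -, -⟩ := h
  have := congrArg List.length hxy
  simp at this
  omega

lemma maxBlocks_replicate {S : Type*} {c : S} {N k : ℕ}
    (h : k ∈ maxBlocks c (List.replicate N c)) : k = N := by
  obtain ⟨x, y, hxy, hx, hy⟩ := h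
  have hxrep : x = List.replicate x.length c := by
    apply List.eq_replicate_of_mem
    intro b hb
    exact List.eq_of_mem_replicate (n := N) (by rw [hxy]; simp [hb])
  have hyrep : y = List.replicate y.length c := by
    apply List.eq_replicate_of_mem
    intro b hb
    exact List.eq_of_mem_replicate (n := N) (by rw [hxy]; simp [hb])
  have hx0 : x = [] := by
    cases x with
    | nil => rfl
    | cons a t =>
      exfalso
      apply hx
      rw [hxrep]
      rw [List.getLast?_eq_getLast (l := List.replicate (a :: t).length c) (by simp [List.replicate_succ])]
      simp [List.getLast_replicate]
  have hy0 : y = [] := by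
    cases y with
    | nil => rfl
    | cons a t =>
      exfalso
      apply hy
      have ha : a = c := by
        have : a ∈ (a :: t) := by simp
        rw [hyrep] at this
        exact List.eq_of_mem_replicate this
      simp [ha]
  subst hx0 hy0
  have := congrArg List.length hxy
  simpa using this.symm

lemma maxBlocks_append {S : Type*} [DecidableEq S] {c : S} {u v : List S} {k : ℕ}
    (h : k ∈ maxBlocks c (u ++ v)) :
    k ∈ maxBlocks c u ∨ k ∈ maxBlocks c v ∨ k = cSuf c u + cPre c v := by
  obtain ⟨x, y, hxy, hx, hy⟩ := h
  rw [List.append_assoc] at hxy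
  rcases List.append_eq_append_iff.mp hxy with ⟨s, hxs, hvs⟩ | ⟨s, hus, hs⟩
  · -- x = u ++ s, v = s ++ (replicate k c ++ y)
    right; left
    refine ⟨s, y, by rw [hvs, List.append_assoc], ?_, hy⟩
    cases s with
    | nil => simp
    | cons a t =>
      rw [hxs, List.getLast?_append_of_ne_nil _ (by simp)] at hx
      exact hx
  · -- u = x ++ s, replicate k c ++ y = s ++ v
    rcases List.append_eq_append_iff.mp hs.symm with ⟨t, hst, hyt⟩ | ⟨t, hrep, hvt⟩
    · -- replicate k c = s ++ t, v = t ++ y : straddle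
      right; right
      have hsrep : s = List.replicate s.length c := by
        apply List.eq_replicate_of_mem
        intro b hb
        exact List.eq_of_mem_replicate (n := k) (by rw [hst]; simp [hb])
      have htrep : t = List.replicate t.length c := by
        apply List.eq_replicate_of_mem
        intro b hb
        exact List.eq_of_mem_replicate (n := k) (by rw [hst]; simp [hb])
      have hlen : s.length + t.length = k := by
        have := congrArg List.length hst
        simp at this
        omega
      have h1 : cSuf c u = s.length := by
        rw [hus]
        conv_lhs => rw [hsrep]
        exact cSuf_append_replicate _ hx
      have h2 : cPre c v = t.length := by
        rw [hyt]
        conv_lhs => rw [htrep]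
        exact cPre_replicate_append _ hy
      omega
    · -- s = replicate k c ++ t, y = t ++ v : block inside u
      left
      refine ⟨x, t, by rw [hus, hrep, List.append_assoc], hx, ?_⟩
      cases t with
      | nil => simp
      | cons a b =>
        rw [hvt] at hy
        simpa using hy

lemma join_replicate_replicate {S : Type*} (c : S) (n m : ℕ) :
    (List.replicate n (List.replicate m c)).flatten = List.replicate (n * m) c := by
  rw [join_eq_flatten]
  induction n with
  | zero => simp
  | succ n ih =>
    rw [List.replicate_succ, List.flatten_cons, ih, ← List.replicate_add]
    ring_nf

lemma maxBlocks_join_replicate {S : Type*} [DecidableEq S] {c : S} {u : List S} {n k : ℕ}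
    (h : k ∈ maxBlocks c (List.replicate n u).flatten) :
    k = 0 ∨ k ∈ maxBlocks c u ∨ k = cSuf c u + cPre c u ∨
      (k = n * u.length ∧ u.length ∈ maxBlocks c u) := by
  rw [join_eq_flatten] at h
  by_cases hall : cPre c u = u.length
  · -- u is all c's
    have hurep : u = List.replicate u.length c := (cPre_eq_length_iff c u).mp hall
    right; right; right
    constructor
    · rw [hurep, ← join_eq_flatten, join_replicate_replicate] at h
      exact maxBlocks_replicate h
    · exact ⟨[], [], by simpa using hurep, by simp, by simp⟩
  · have hlt : cPre c u < u.length := lt_of_le_of_ne (cPre_le_length c u) hall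
    revert h
    induction n with
    | zero =>
      intro h
      left
      exact maxBlocks_nil (by simpa using h)
    | succ n ih =>
      intro h
      rw [List.replicate_succ, List.flatten_cons] at h
      rcases maxBlocks_append h with h1 | h1 | h1
      · right; left; exact h1
      · rcases ih h1 with h2 | h2 | h2 | h2
        · left; exact h2
        · right; left; exact h2
        · right; right; left; exact h2
        · -- impossible: u.length ∈ maxBlocks c u forces u all c's
          exfalso
          obtain ⟨x, y, hxy, -, -⟩ := h2.2
          have hlx := congrArg List.length hxy
          simp at hlx
          have hx0 : x = [] := by
            apply List.eq_nil_of_length_eq_zero; omega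
          have hy0 : y = [] := by
            apply List.eq_nil_of_length_eq_zero; omega
          subst hx0 hy0
          simp only [List.nil_append, List.append_nil] at hxy
          exact hall ((cPre_eq_length_iff c u).mpr hxy)
      · cases n with
        | zero =>
          simp only [List.replicate_zero, List.flatten_nil, cPre] at h1
          right; left
          rw [h1, Nat.add_zero]
          exact cSuf_mem c u
        | succ m =>
          right; right; left
          rw [h1]
          congr 1
          rw [List.replicate_succ, List.flatten_cons]
          exact cPre_append_of_lt _ hlt

lemma maxBlocks_word_le {S : Type*} {c : S} {w : List S} {k : ℕ}
    (h : k ∈ maxBlocks c w) : k ≤ w.length := by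
  obtain ⟨x, y, hxy, -, -⟩ := h
  have := congrArg List.length hxy
  simp at this
  omega

theorem polyPumping_polyUniform {S : Type*} [Fintype S] (e : PolyExpr S) (c : S) :
    ∃ A : Finset (Polynomial ℚ), ∀ n : ℕ, ∀ k ∈ maxBlocks c (e.eval n),
      ∃ P ∈ A, (k : ℚ) = P.eval (n : ℚ) := by
  classical
  induction e with
  | word w =>
    refine ⟨(Finset.range (w.length + 1)).image (fun m : ℕ => Polynomial.C (m : ℚ)), ?_⟩
    intro n k hk
    have hkle : k ≤ w.length := maxBlocks_word_le hk
    refine ⟨Polynomial.C (k : ℚ), ?_, by simp⟩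
    exact Finset.mem_image.mpr ⟨k, Finset.mem_range.mpr (by omega), rfl⟩
  | cat e e' ih ih' =>
    obtain ⟨A, hA⟩ := ih
    obtain ⟨A', hA'⟩ := ih'
    refine ⟨A ∪ A' ∪ Finset.image₂ (· + ·) A A', ?_⟩
    intro n k hk
    rcases maxBlocks_append (u := e.eval n) (v := e'.eval n) hk with h1 | h1 | h1
    · obtain ⟨P, hP, hPk⟩ := hA n k h1
      exact ⟨P, by simp [Finset.mem_union, hP], hPk⟩
    · obtain ⟨P, hP, hPk⟩ := hA' n k h1
      exact ⟨P, by simp [Finset.mem_union, hP], hPk⟩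
    · obtain ⟨P, hP, hPk⟩ := hA n _ (cSuf_mem c (e.eval n))
      obtain ⟨Q, hQ, hQk⟩ := hA' n _ (cPre_mem c (e'.eval n))
      refine ⟨P + Q, ?_, ?_⟩
      · simp only [Finset.mem_union]
        right
        exact Finset.mem_image₂.mpr ⟨P, hP, Q, hQ, rfl⟩
      · rw [h1]
        push_cast
        rw [hPk, hQk, Polynomial.eval_add]
  | star e ih =>
    obtain ⟨A, hA⟩ := ih
    refine ⟨(A ∪ Finset.image₂ (· + ·) A A ∪ A.image (Polynomial.X * ·)) ∪ {0}, ?_⟩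
    intro n k hk
    rcases maxBlocks_join_replicate (u := e.eval n) (n := n) hk with h1 | h1 | h1 | ⟨h1, h2⟩
    · exact ⟨0, by simp, by simp [h1]⟩
    · obtain ⟨P, hP, hPk⟩ := hA n k h1
      exact ⟨P, by simp [Finset.mem_union, hP], hPk⟩
    · obtain ⟨P, hP, hPk⟩ := hA n _ (cSuf_mem c (e.eval n))
      obtain ⟨Q, hQ, hQk⟩ := hA n _ (cPre_mem c (e.eval n))
      refine ⟨P + Q, ?_, ?_⟩
      · simp only [Finset.mem_union]
        left; left; right
        exact Finset.mem_image₂.mpr ⟨P, hP, Q, hQ, rfl⟩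
      · rw [h1]
        push_cast
        rw [hPk, hQk, Polynomial.eval_add]
    · obtain ⟨P, hP, hPk⟩ := hA n _ h2
      refine ⟨Polynomial.X * P, ?_, ?_⟩
      · simp only [Finset.mem_union]
        left; right
        exact Finset.mem_image.mpr ⟨P, hP, rfl⟩
      · rw [h1]
        push_cast
        rw [hPk, Polynomial.eval_mul, Polynomial.eval_X]
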